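/- arXiv:1409.4864 — 2 statements merged into one kernel-verified Lean document; each statement's English description precedes it below -/
import Mathlib

section
/- Let 0 < l, m < d with l + m > d. Then there exists a constant C such that for every nonzero k ∈ ℤ^d, the sum over all pairs (k₁, k₂) of nonzero lattice points with k₁ + k₂ = k of 1/(|k₁|^l |k₂|^m) is bounded by C / |k|^(l+m-d). -/
open scoped ENNReal NNReal

noncomputable section

/-- Euclidean norm of a lattice point in `ℤ^d`. -/
def znormd (d : ℕ) (k : Fin d → ℤ) : ℝ := Real.sqrt (∑ i, ((k i : ℝ))^2)

def toE (d : ℕ) (k : Fin d → ℤ) : EuclideanSpace ℝ (Fin d) := WithLp.toLp 2 (fun i => (k i : ℝ))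

lemma znormd_eq_norm (d : ℕ) (k : Fin d → ℤ) : znormd d k = ‖toE d k‖ := by
  rw [EuclideanSpace.norm_eq]
  simp [znormd, toE, sq_abs]

lemma znormd_nonneg (d : ℕ) (k : Fin d → ℤ) : 0 ≤ znormd d k := Real.sqrt_nonneg _

lemma one_le_znormd {d : ℕ} {k : Fin d → ℤ} (h : k ≠ 0) : 1 ≤ znormd d k := by
  obtain ⟨i, hi⟩ : ∃ i, k i ≠ 0 := by
    by_contra hc; push_neg at hc; exact h (funext hc)
  have h1 : (1:ℝ) ≤ ((k i : ℝ))^2 := by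
    have : (1:ℤ) ≤ (k i)^2 := by
      rcases lt_or_gt_of_ne hi with h'|h'
      · nlinarith
      · nlinarith
    exact_mod_cast this
  have h2 : ((k i:ℝ))^2 ≤ ∑ j, ((k j : ℝ))^2 :=
    Finset.single_le_sum (f := fun j => ((k j:ℝ))^2) (fun j _ => sq_nonneg _) (Finset.mem_univ i)
  have := Real.sqrt_le_sqrt (h1.trans h2)
  simpa [znormd] using this

lemma znormd_pos {d : ℕ} {k : Fin d → ℤ} (h : k ≠ 0) : 0 < znormd d k :=
  lt_of_lt_of_le one_pos (one_le_znormd h)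

lemma znormd_add_le (d : ℕ) (a b : Fin d → ℤ) :
    znormd d (a + b) ≤ znormd d a + znormd d b := by
  rw [znormd_eq_norm, znormd_eq_norm, znormd_eq_norm]
  have h : toE d (a + b) = toE d a + toE d b := by
    ext i; simp [toE]
  rw [h]; exact norm_add_le _ _

lemma znormd_neg (d : ℕ) (a : Fin d → ℤ) : znormd d (-a) = znormd d a := by
  simp [znormd]

lemma coord_le_znormd (d : ℕ) (k : Fin d → ℤ) (i : Fin d) :
    |(k i : ℝ)| ≤ znormd d k := by
  rw [znormd, ← Real.sqrt_sq_eq_abs]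
  exact Real.sqrt_le_sqrt (Finset.single_le_sum (f := fun j => ((k j:ℝ))^2) (fun j _ => sq_nonneg _) (Finset.mem_univ i))

def box (d : ℕ) (R : ℝ) : Finset (Fin d → ℤ) :=
  Finset.Icc (fun _ => -⌊R⌋) (fun _ => ⌊R⌋)

lemma mem_box {d : ℕ} {R : ℝ} {n : Fin d → ℤ} (h : znormd d n ≤ R) : n ∈ box d R := by
  rw [box, Finset.mem_Icc]
  constructor <;> intro i
  · have := (abs_le.mp ((coord_le_znormd d n i).trans h)).1
    have : (-R : ℝ) ≤ (n i : ℤ) := this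
    -- -⌊R⌋ ≤ n i
    have h2 : -(n i : ℝ) ≤ R := by linarith
    have h3 : -(n i) ≤ ⌊R⌋ := Int.le_floor.mpr (by exact_mod_cast h2)
    simp only []
    omega
  · have := (abs_le.mp ((coord_le_znormd d n i).trans h)).2
    exact Int.le_floor.mpr (by exact_mod_cast this)

lemma card_box_le (d : ℕ) {R : ℝ} (hR : 1 ≤ R) :
    ((box d R).card : ℝ) ≤ (3 * R) ^ d := by
  have hcard : (box d R).card = ((⌊R⌋ + 1 - (-⌊R⌋)).toNat) ^ d := by
    rw [box, Pi.card_Icc]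
    simp [Int.card_Icc]
  rw [hcard]
  have h0 : (0:ℤ) ≤ ⌊R⌋ := Int.floor_nonneg.mpr (by linarith)
  have h1 : (((⌊R⌋ + 1 - (-⌊R⌋)).toNat : ℝ)) = 2 * (⌊R⌋ : ℝ) + 1 := by
    have h' : ((⌊R⌋ + 1 - (-⌊R⌋)).toNat : ℤ) = 2*⌊R⌋+1 := by omega
    exact_mod_cast congrArg (Int.cast : ℤ → ℝ) h'
  rw [Nat.cast_pow, h1]
  have h2 : 2 * (⌊R⌋:ℝ) + 1 ≤ 3 * R := by
    have := Int.floor_le R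
    linarith
  exact pow_le_pow_left₀ (by positivity) h2 d

lemma tsum_indicator_le {d : ℕ} (A : Set (Fin d → ℤ)) (B : Finset (Fin d → ℤ))
    (hAB : ∀ n ∈ A, n ∈ B) (f : (Fin d → ℤ) → ℝ≥0∞) (c : ℝ≥0∞)
    (hf : ∀ n ∈ A, f n ≤ c) :
    ∑' n, A.indicator f n ≤ B.card * c := by
  have h1 : ∀ n, A.indicator f n ≤ Set.indicator (↑B) (fun _ => c) n := by
    intro n
    by_cases hn : n ∈ A
    · rw [Set.indicator_of_mem hn, Set.indicator_of_mem (by exact_mod_cast hAB n hn)]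
      exact hf n hn
    · rw [Set.indicator_of_notMem hn]; positivity
  calc ∑' n, A.indicator f n ≤ ∑' n, Set.indicator (↑B) (fun _ => c) n := ENNReal.tsum_le_tsum h1
    _ = ∑ n ∈ B, Set.indicator (↑B) (fun _ => c) n :=
        tsum_eq_sum (by intro n hn; exact Set.indicator_of_notMem (by exact_mod_cast hn) _)
    _ = ∑ n ∈ B, c := Finset.sum_congr rfl (fun n hn => Set.indicator_of_mem (by exact_mod_cast hn) _)
    _ = B.card * c := by simp [Finset.sum_const, nsmul_eq_mul]

lemma rcalc1 (d : ℕ) (s R : ℝ) (hR : 0 < R) (j : ℕ) :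
    (3 * (R/2^j))^d * (1 / (R/2^(j+1)) ^ s)
      = (3:ℝ)^d * 2^s * R^((d:ℝ)-s) * ((2:ℝ)^(s-(d:ℝ)))^j := by
  have h2 : (0:ℝ) < 2 := two_pos
  have hu : (0:ℝ) < R/2^(j+1) := by positivity
  have hL : (0:ℝ) < (3 * (R/2^j))^d * (1 / (R/2^(j+1)) ^ s) := by positivity
  have hRhs : (0:ℝ) < (3:ℝ)^d * 2^s * R^((d:ℝ)-s) * ((2:ℝ)^(s-(d:ℝ)))^j := by positivity
  refine Real.log_injOn_pos (Set.mem_Ioi.mpr hL) (Set.mem_Ioi.mpr hRhs) ?_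
  simp (disch := positivity) only [Real.log_mul, Real.log_div, Real.log_pow,
    Real.log_inv, Real.log_rpow, one_div]
  push_cast; ring

lemma rcalc2 (d : ℕ) (s R : ℝ) (hR : 0 < R) (j : ℕ) :
    (3 * (R * 2^(j+1)))^d * (1 / (R * 2^j) ^ s)
      = (6:ℝ)^d * R^((d:ℝ)-s) * ((2:ℝ)^((d:ℝ)-s))^j := by
  have h2 : (0:ℝ) < 2 := two_pos
  have hu : (0:ℝ) < R * 2^j := by positivity
  have hL : (0:ℝ) < (3 * (R * 2^(j+1)))^d * (1 / (R * 2^j) ^ s) := by positivity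
  have hRhs : (0:ℝ) < (6:ℝ)^d * R^((d:ℝ)-s) * ((2:ℝ)^((d:ℝ)-s))^j := by positivity
  refine Real.log_injOn_pos (Set.mem_Ioi.mpr hL) (Set.mem_Ioi.mpr hRhs) ?_
  have h6 : Real.log 6 = Real.log 2 + Real.log 3 := by
    rw [← Real.log_mul (by norm_num) (by norm_num)]; norm_num
  simp (disch := positivity) only [Real.log_mul, Real.log_div, Real.log_pow,
    Real.log_inv, Real.log_rpow, one_div, h6]
  push_cast; ring

lemma geom_ne_top {r : ℝ} (hr1 : r < 1) : (1 - ENNReal.ofReal r)⁻¹ ≠ ∞ := by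
  rw [Ne, ENNReal.inv_eq_top, tsub_eq_zero_iff_le]
  exact fun h => absurd (lt_of_le_of_lt h (ENNReal.ofReal_lt_one.mpr hr1)) (lt_irrefl _)

lemma sum_low (d : ℕ) (s : ℝ) (hs0 : 0 < s) (hsd : s < d) :
    ∃ C : ℝ≥0∞, C ≠ ∞ ∧ ∀ R : ℝ, 0 < R →
      ∑' n : Fin d → ℤ, Set.indicator {n : Fin d → ℤ | n ≠ 0 ∧ znormd d n ≤ R}
        (fun n => ENNReal.ofReal (1 / znormd d n ^ s)) n
        ≤ C * ENNReal.ofReal (R ^ ((d:ℝ) - s)) := by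
  set r : ℝ := (2:ℝ) ^ (s - (d:ℝ)) with hr_def
  have hr0 : 0 < r := Real.rpow_pos_of_pos two_pos _
  have hr1 : r < 1 := Real.rpow_lt_one_of_one_lt_of_neg one_lt_two (by linarith)
  refine ⟨ENNReal.ofReal ((3:ℝ)^d * 2^s) * (1 - ENNReal.ofReal r)⁻¹,
    ENNReal.mul_ne_top ENNReal.ofReal_ne_top (geom_ne_top hr1), ?_⟩
  intro R hR
  set S : Set (Fin d → ℤ) := {n | n ≠ 0 ∧ znormd d n ≤ R} with hS
  set f : (Fin d → ℤ) → ℝ≥0∞ := fun n => ENNReal.ofReal (1 / znormd d n ^ s) with hf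
  set ann : ℕ → Set (Fin d → ℤ) :=
    fun j => {n | n ≠ 0 ∧ R / 2^(j+1) < znormd d n ∧ znormd d n ≤ R / 2^j} with hann
  have cover : ∀ n, S.indicator f n ≤ ∑' j, (ann j).indicator f n := by
    intro n
    by_cases hn : n ∈ S
    · obtain ⟨hn0, hnR⟩ := hn
      have hpos : 0 < znormd d n := znormd_pos hn0
      have hex : ∃ j : ℕ, R / 2^(j+1) < znormd d n := by
        obtain ⟨j, hj⟩ := pow_unbounded_of_one_lt (R / znormd d n) one_lt_two
        refine ⟨j, ?_⟩
        rw [div_lt_iff₀ (by positivity)]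
        rw [div_lt_iff₀ hpos] at hj
        calc R < 2^j * znormd d n := hj
          _ ≤ znormd d n * 2^(j+1) := by
              rw [mul_comm]; gcongr <;> [skip; omega] <;> norm_num
      have hj1 : R / 2^(Nat.find hex + 1) < znormd d n := Nat.find_spec hex
      have hj2 : znormd d n ≤ R / 2^(Nat.find hex) := by
        rcases Nat.eq_zero_or_eq_succ_pred (Nat.find hex) with h0 | hsucc
        · rw [h0]; simpa using hnR
        · rw [hsucc]
          have := Nat.find_min hex (m := Nat.find hex - 1) (by omega)
          push_neg at this
          simpa [Nat.succ_eq_add_one] using this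
      have hmem : n ∈ ann (Nat.find hex) := by
        simp only [hann, Set.mem_setOf_eq]; exact ⟨hn0, hj1, hj2⟩
      calc S.indicator f n = f n := Set.indicator_of_mem (by exact ⟨hn0, hnR⟩) f
        _ = (ann (Nat.find hex)).indicator f n := (Set.indicator_of_mem hmem f).symm
        _ ≤ ∑' j, (ann j).indicator f n := ENNReal.le_tsum _
    · simp [Set.indicator_of_notMem hn]
  have hann_bd : ∀ j : ℕ, ∑' n, (ann j).indicator f n
      ≤ ENNReal.ofReal (((3:ℝ)^d * 2^s * R^((d:ℝ)-s)) * r^j) := by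
    intro j
    by_cases hcase : 1 ≤ R / 2^j
    · have hsub : ∀ n ∈ ann j, n ∈ box d (R / 2^j) := fun n hn => mem_box hn.2.2
      have hupos : (0:ℝ) < R / 2^(j+1) := by positivity
      have hub : ∀ n ∈ ann j, f n ≤ ENNReal.ofReal (1 / (R/2^(j+1))^s) := by
        intro n hn
        apply ENNReal.ofReal_le_ofReal
        have h1 : (R/2^(j+1))^s ≤ znormd d n ^ s :=
          Real.rpow_le_rpow hupos.le hn.2.1.le hs0.le
        have h2 : (0:ℝ) < (R/2^(j+1))^s := Real.rpow_pos_of_pos hupos _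
        exact one_div_le_one_div_of_le h2 h1
      calc ∑' n, (ann j).indicator f n
          ≤ (box d (R/2^j)).card * ENNReal.ofReal (1/(R/2^(j+1))^s) :=
            tsum_indicator_le _ _ hsub f _ hub
        _ ≤ ENNReal.ofReal ((3*(R/2^j))^d) * ENNReal.ofReal (1/(R/2^(j+1))^s) := by
            gcongr
            rw [← ENNReal.ofReal_natCast]
            exact ENNReal.ofReal_le_ofReal (card_box_le d hcase)
        _ = ENNReal.ofReal ((3*(R/2^j))^d * (1/(R/2^(j+1))^s)) :=
            (ENNReal.ofReal_mul (by positivity)).symm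
        _ = ENNReal.ofReal (((3:ℝ)^d * 2^s * R^((d:ℝ)-s)) * r^j) := by
            rw [rcalc1 d s R hR j]
    · have hempty : ann j = ∅ := by
        ext n
        simp only [hann, Set.mem_setOf_eq, Set.mem_empty_iff_false, iff_false, not_and]
        intro hn0 h1 
        have := one_le_znormd hn0
        push_neg at hcase
        intro h2
        linarith
      simp [hempty]
  calc ∑' n, S.indicator f n ≤ ∑' n, ∑' j, (ann j).indicator f n := ENNReal.tsum_le_tsum cover
    _ = ∑' j, ∑' n, (ann j).indicator f n := ENNReal.tsum_comm
    _ ≤ ∑' j : ℕ, ENNReal.ofReal (((3:ℝ)^d * 2^s * R^((d:ℝ)-s)) * r^j) :=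
        ENNReal.tsum_le_tsum hann_bd
    _ = ∑' j : ℕ, ENNReal.ofReal ((3:ℝ)^d * 2^s * R^((d:ℝ)-s)) * (ENNReal.ofReal r)^j := by
        congr 1; funext j
        rw [ENNReal.ofReal_mul (by positivity), ENNReal.ofReal_pow hr0.le]
    _ = ENNReal.ofReal ((3:ℝ)^d * 2^s * R^((d:ℝ)-s)) * (1 - ENNReal.ofReal r)⁻¹ := by
        rw [ENNReal.tsum_mul_left, ENNReal.tsum_geometric]
    _ = ENNReal.ofReal ((3:ℝ)^d * 2^s) * (1 - ENNReal.ofReal r)⁻¹ * ENNReal.ofReal (R^((d:ℝ)-s)) := by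
        rw [ENNReal.ofReal_mul (by positivity)]
        ring

lemma sum_high (d : ℕ) (t : ℝ) (htd : (d:ℝ) < t) :
    ∃ C : ℝ≥0∞, C ≠ ∞ ∧ ∀ R : ℝ, 1/2 ≤ R →
      ∑' n : Fin d → ℤ, Set.indicator {n : Fin d → ℤ | R < znormd d n}
        (fun n => ENNReal.ofReal (1 / znormd d n ^ t)) n
        ≤ C * ENNReal.ofReal (R ^ ((d:ℝ) - t)) := by
  set r : ℝ := (2:ℝ) ^ ((d:ℝ) - t) with hr_def
  have hr0 : 0 < r := Real.rpow_pos_of_pos two_pos _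
  have hr1 : r < 1 := Real.rpow_lt_one_of_one_lt_of_neg one_lt_two (by linarith)
  refine ⟨ENNReal.ofReal ((6:ℝ)^d) * (1 - ENNReal.ofReal r)⁻¹,
    ENNReal.mul_ne_top ENNReal.ofReal_ne_top (geom_ne_top hr1), ?_⟩
  intro R hR
  have hR0 : (0:ℝ) < R := by linarith
  set S : Set (Fin d → ℤ) := {n | R < znormd d n} with hS
  set f : (Fin d → ℤ) → ℝ≥0∞ := fun n => ENNReal.ofReal (1 / znormd d n ^ t) with hf
  set ann : ℕ → Set (Fin d → ℤ) :=
    fun j => {n | R * 2^j < znormd d n ∧ znormd d n ≤ R * 2^(j+1)} with hann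
  have cover : ∀ n, S.indicator f n ≤ ∑' j, (ann j).indicator f n := by
    intro n
    by_cases hn : n ∈ S
    · have hnR : R < znormd d n := hn
      have hex : ∃ j : ℕ, znormd d n ≤ R * 2^(j+1) := by
        obtain ⟨j, hj⟩ := pow_unbounded_of_one_lt (znormd d n / R) one_lt_two
        refine ⟨j, ?_⟩
        rw [div_lt_iff₀ hR0] at hj
        have h2 : (2:ℝ)^j ≤ 2^(j+1) := by
          apply pow_le_pow_right₀ <;> [norm_num; omega]
        nlinarith
      have hj1 : znormd d n ≤ R * 2^(Nat.find hex + 1) := Nat.find_spec hex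
      have hj2 : R * 2^(Nat.find hex) < znormd d n := by
        rcases Nat.eq_zero_or_eq_succ_pred (Nat.find hex) with h0 | hsucc
        · rw [h0]; simpa using hnR
        · rw [hsucc]
          have := Nat.find_min hex (m := Nat.find hex - 1) (by omega)
          push_neg at this
          simpa [Nat.succ_eq_add_one] using this
      have hmem : n ∈ ann (Nat.find hex) := by
        simp only [hann, Set.mem_setOf_eq]; exact ⟨hj2, hj1⟩
      calc S.indicator f n = f n := Set.indicator_of_mem hn f
        _ = (ann (Nat.find hex)).indicator f n := (Set.indicator_of_mem hmem f).symm
        _ ≤ ∑' j, (ann j).indicator f n := ENNReal.le_tsum _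
    · simp [Set.indicator_of_notMem hn]
  have hann_bd : ∀ j : ℕ, ∑' n, (ann j).indicator f n
      ≤ ENNReal.ofReal (((6:ℝ)^d * R^((d:ℝ)-t)) * r^j) := by
    intro j
    have hsub : ∀ n ∈ ann j, n ∈ box d (R * 2^(j+1)) := fun n hn => mem_box hn.2
    have hupos : (0:ℝ) < R * 2^j := by positivity
    have hcase : (1:ℝ) ≤ R * 2^(j+1) := by
      have h2 : (2:ℝ) ≤ 2^(j+1) := by
        calc (2:ℝ) = 2^1 := (pow_one 2).symm
          _ ≤ 2^(j+1) := by apply pow_le_pow_right₀ <;> [norm_num; omega]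
      nlinarith
    have hub : ∀ n ∈ ann j, f n ≤ ENNReal.ofReal (1 / (R * 2^j)^t) := by
      intro n hn
      apply ENNReal.ofReal_le_ofReal
      have h1 : (R * 2^j)^t ≤ znormd d n ^ t :=
        Real.rpow_le_rpow hupos.le hn.1.le (by linarith [Nat.cast_nonneg (α := ℝ) d])
      have h2 : (0:ℝ) < (R * 2^j)^t := Real.rpow_pos_of_pos hupos _
      exact one_div_le_one_div_of_le h2 h1
    calc ∑' n, (ann j).indicator f n
        ≤ (box d (R * 2^(j+1))).card * ENNReal.ofReal (1/(R * 2^j)^t) :=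
          tsum_indicator_le _ _ hsub f _ hub
      _ ≤ ENNReal.ofReal ((3*(R * 2^(j+1)))^d) * ENNReal.ofReal (1/(R * 2^j)^t) := by
          gcongr
          rw [← ENNReal.ofReal_natCast]
          exact ENNReal.ofReal_le_ofReal (card_box_le d hcase)
      _ = ENNReal.ofReal ((3*(R * 2^(j+1)))^d * (1/(R * 2^j)^t)) :=
          (ENNReal.ofReal_mul (by positivity)).symm
      _ = ENNReal.ofReal (((6:ℝ)^d * R^((d:ℝ)-t)) * r^j) := by
          rw [rcalc2 d t R hR0 j]
  calc ∑' n, S.indicator f n ≤ ∑' n, ∑' j, (ann j).indicator f n := ENNReal.tsum_le_tsum cover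
    _ = ∑' j, ∑' n, (ann j).indicator f n := ENNReal.tsum_comm
    _ ≤ ∑' j : ℕ, ENNReal.ofReal (((6:ℝ)^d * R^((d:ℝ)-t)) * r^j) :=
        ENNReal.tsum_le_tsum hann_bd
    _ = ∑' j : ℕ, ENNReal.ofReal ((6:ℝ)^d * R^((d:ℝ)-t)) * (ENNReal.ofReal r)^j := by
        congr 1; funext j
        rw [ENNReal.ofReal_mul (by positivity), ENNReal.ofReal_pow hr0.le]
    _ = ENNReal.ofReal ((6:ℝ)^d * R^((d:ℝ)-t)) * (1 - ENNReal.ofReal r)⁻¹ := by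
        rw [ENNReal.tsum_mul_left, ENNReal.tsum_geometric]
    _ = ENNReal.ofReal ((6:ℝ)^d) * (1 - ENNReal.ofReal r)⁻¹ * ENNReal.ofReal (R^((d:ℝ)-t)) := by
        rw [ENNReal.ofReal_mul (by positivity)]
        ring

lemma rpow_helper {x : ℝ} (hx : 0 < x) (u v : ℝ) : x ^ u * x⁻¹ ^ v = x ^ (u - v) := by
  rw [Real.inv_rpow hx.le, ← Real.rpow_neg hx.le, ← Real.rpow_add hx]
  ring_nf

/-- for `0 < l, m < d` with `l + m > d`, the convolution-type lattice sum
`∑_{k₁+k₂=k, k₁,k₂ ≠ 0} |k₁|^{-l} |k₂|^{-m}` is bounded by `C / |k|^{l+m-d}`. -/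
theorem stmt0 (d : ℕ) (l m : ℝ) (hl0 : 0 < l) (hld : l < d) (hm0 : 0 < m) (hmd : m < d)
    (hlm : (d : ℝ) < l + m) :
    ∃ C : ℝ≥0, ∀ k : Fin d → ℤ, k ≠ 0 →
      (∑' k₁ : Fin d → ℤ,
          if k₁ ≠ 0 ∧ k₁ ≠ k then
            ENNReal.ofReal (1 / (znormd d k₁ ^ l * znormd d (k - k₁) ^ m))
          else 0) ≤
        (C : ℝ≥0∞) / ENNReal.ofReal (znormd d k ^ (l + m - d)) := by
  obtain ⟨C₁, hC₁top, hC₁⟩ := sum_low d l hl0 hld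
  obtain ⟨C₂, hC₂top, hC₂⟩ := sum_low d m hm0 hmd
  obtain ⟨C₃, hC₃top, hC₃⟩ := sum_high d (l + m) hlm
  set Ctot : ℝ≥0∞ :=
    (C₁ + C₂ + ENNReal.ofReal ((3:ℝ) ^ m) * C₃) * ENNReal.ofReal ((2:ℝ) ^ (l + m - (d:ℝ)))
    with hCtot_def
  have hCtot_ne : Ctot ≠ ∞ := by
    apply ENNReal.mul_ne_top _ ENNReal.ofReal_ne_top
    apply ENNReal.add_ne_top.mpr
    exact ⟨ENNReal.add_ne_top.mpr ⟨hC₁top, hC₂top⟩,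
      ENNReal.mul_ne_top ENNReal.ofReal_ne_top hC₃top⟩
  refine ⟨Ctot.toNNReal, ?_⟩
  intro k hk
  set K : ℝ := znormd d k with hK_def
  have hK1 : 1 ≤ K := one_le_znormd hk
  have hK0 : 0 < K := by linarith
  have hK2 : (0:ℝ) < K / 2 := by linarith
  have hK2' : (1:ℝ)/2 ≤ K / 2 := by linarith
  -- the three majorants
  set GA : (Fin d → ℤ) → ℝ≥0∞ := fun k₁ =>
    Set.indicator {n : Fin d → ℤ | n ≠ 0 ∧ znormd d n ≤ K/2}
      (fun n => ENNReal.ofReal (1 / znormd d n ^ l)) k₁ * ENNReal.ofReal (((K/2)⁻¹) ^ m)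
    with hGA_def
  set GB : (Fin d → ℤ) → ℝ≥0∞ := fun k₁ =>
    Set.indicator {n : Fin d → ℤ | n ≠ 0 ∧ znormd d n ≤ K/2}
      (fun n => ENNReal.ofReal (1 / znormd d n ^ m)) (k - k₁) * ENNReal.ofReal (((K/2)⁻¹) ^ l)
    with hGB_def
  set GC : (Fin d → ℤ) → ℝ≥0∞ := fun k₁ =>
    Set.indicator {n : Fin d → ℤ | K/2 < znormd d n}
      (fun n => ENNReal.ofReal (1 / znormd d n ^ (l + m))) k₁ * ENNReal.ofReal ((3:ℝ) ^ m)
    with hGC_def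
  -- pointwise bound
  have hpt : ∀ k₁ : Fin d → ℤ,
      (if k₁ ≠ 0 ∧ k₁ ≠ k then
          ENNReal.ofReal (1 / (znormd d k₁ ^ l * znormd d (k - k₁) ^ m))
        else 0) ≤ GA k₁ + GB k₁ + GC k₁ := by
    intro k₁
    by_cases hP : k₁ ≠ 0 ∧ k₁ ≠ k
    · rw [if_pos hP]
      obtain ⟨h1, h2⟩ := hP
      have hk₂0 : k - k₁ ≠ 0 := sub_ne_zero.mpr (Ne.symm h2)
      set a : ℝ := znormd d k₁ with ha_def
      set b : ℝ := znormd d (k - k₁) with hb_def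
      have ha1 : 1 ≤ a := one_le_znormd h1
      have hb1 : 1 ≤ b := one_le_znormd hk₂0
      have ha0 : 0 < a := by linarith
      have hb0 : 0 < b := by linarith
      have htri : K ≤ a + b := by
        have h := znormd_add_le d k₁ (k - k₁)
        have he : k₁ + (k - k₁) = k := by abel
        rw [he] at h
        exact h
      have hal : (0:ℝ) < a ^ l := Real.rpow_pos_of_pos ha0 _
      have hbm : (0:ℝ) < b ^ m := Real.rpow_pos_of_pos hb0 _
      by_cases hca : a ≤ K/2
      · -- |k₁| small : use GA
        have hbK : K/2 ≤ b := by linarith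
        have hb2 : (0:ℝ) < (K/2) ^ m := Real.rpow_pos_of_pos hK2 _
        have key : 1 / (a ^ l * b ^ m) ≤ (1 / a ^ l) * ((K/2)⁻¹) ^ m := by
          have hK2m : (K/2) ^ m ≤ b ^ m := Real.rpow_le_rpow hK2.le hbK hm0.le
          rw [Real.inv_rpow hK2.le, ← one_div, one_div_mul_one_div]
          exact one_div_le_one_div_of_le (by positivity)
            (mul_le_mul_of_nonneg_left hK2m hal.le)
        have : ENNReal.ofReal (1 / (a ^ l * b ^ m)) ≤ GA k₁ := by
          have hmem : k₁ ∈ {n : Fin d → ℤ | n ≠ 0 ∧ znormd d n ≤ K/2} := by exact ⟨h1, hca⟩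
          simp only [hGA_def]
          rw [Set.indicator_of_mem hmem]
          rw [← ENNReal.ofReal_mul (by positivity)]
          exact ENNReal.ofReal_le_ofReal key
        calc ENNReal.ofReal (1 / (a ^ l * b ^ m)) ≤ GA k₁ := this
          _ ≤ GA k₁ + GB k₁ + GC k₁ := by
            exact le_trans (self_le_add_right _ _) (self_le_add_right _ _)
      · by_cases hcb : b ≤ K/2
        · -- |k₂| small : use GB
          have haK : K/2 ≤ a := le_of_not_ge hca
          have key : 1 / (a ^ l * b ^ m) ≤ (1 / b ^ m) * ((K/2)⁻¹) ^ l := by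
            have hK2l : (K/2) ^ l ≤ a ^ l := Real.rpow_le_rpow hK2.le haK hl0.le
            rw [Real.inv_rpow hK2.le, ← one_div, one_div_mul_one_div]
            apply one_div_le_one_div_of_le (by positivity)
            calc b ^ m * (K/2) ^ l ≤ b ^ m * a ^ l :=
                  mul_le_mul_of_nonneg_left hK2l hbm.le
              _ = a ^ l * b ^ m := mul_comm _ _
          have : ENNReal.ofReal (1 / (a ^ l * b ^ m)) ≤ GB k₁ := by
            have hmem : k - k₁ ∈ {n : Fin d → ℤ | n ≠ 0 ∧ znormd d n ≤ K/2} := by exact ⟨hk₂0, hcb⟩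
            simp only [hGB_def]
            rw [Set.indicator_of_mem hmem]
            rw [← ENNReal.ofReal_mul (by positivity)]
            exact ENNReal.ofReal_le_ofReal key
          calc ENNReal.ofReal (1 / (a ^ l * b ^ m)) ≤ GB k₁ := this
            _ ≤ GA k₁ + GB k₁ + GC k₁ :=
              le_trans (self_le_add_left _ _) (self_le_add_right _ _)
        · -- both large : use GC
          push_neg at hca hcb
          have hab : a ≤ 3 * b := by
            have h : a ≤ K + b := by
              have h := znormd_add_le d k (-(k - k₁))
              have he : k + -(k - k₁) = k₁ := by abel
              rw [he, znormd_neg] at h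
              exact h
            linarith
          have key : 1 / (a ^ l * b ^ m) ≤ (1 / a ^ (l + m)) * (3:ℝ) ^ m := by
            have hm' : a ^ m ≤ (3:ℝ) ^ m * b ^ m := by
              have h' : a ^ m ≤ (3 * b) ^ m := Real.rpow_le_rpow ha0.le hab hm0.le
              rwa [Real.mul_rpow (by norm_num) hb0.le] at h'
            have h5' : a ^ (l + m) = a ^ l * a ^ m := Real.rpow_add ha0 _ _
            have halm : (0:ℝ) < a ^ (l + m) := Real.rpow_pos_of_pos ha0 _
            rw [div_mul_eq_mul_div, one_mul, div_le_div_iff₀ (by positivity) halm, one_mul, h5']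
            calc a ^ l * a ^ m ≤ a ^ l * ((3:ℝ) ^ m * b ^ m) :=
                  mul_le_mul_of_nonneg_left hm' hal.le
              _ = (3:ℝ) ^ m * (a ^ l * b ^ m) := by ring
          have : ENNReal.ofReal (1 / (a ^ l * b ^ m)) ≤ GC k₁ := by
            have hmem : k₁ ∈ {n : Fin d → ℤ | K/2 < znormd d n} := by exact hca
            simp only [hGC_def]
            rw [Set.indicator_of_mem hmem]
            rw [← ENNReal.ofReal_mul (by positivity)]
            exact ENNReal.ofReal_le_ofReal key
          calc ENNReal.ofReal (1 / (a ^ l * b ^ m)) ≤ GC k₁ := this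
            _ ≤ GA k₁ + GB k₁ + GC k₁ := self_le_add_left _ _
    · rw [if_neg hP]; positivity
  -- sum the three parts
  have hsumA : ∑' k₁, GA k₁ ≤ C₁ * ENNReal.ofReal ((K/2) ^ ((d:ℝ) - l - m)) := by
    rw [hGA_def]
    rw [ENNReal.tsum_mul_right]
    calc (∑' k₁, Set.indicator {n : Fin d → ℤ | n ≠ 0 ∧ znormd d n ≤ K/2}
          (fun n => ENNReal.ofReal (1 / znormd d n ^ l)) k₁) * ENNReal.ofReal (((K/2)⁻¹) ^ m)
        ≤ (C₁ * ENNReal.ofReal ((K/2) ^ ((d:ℝ) - l))) * ENNReal.ofReal (((K/2)⁻¹) ^ m) :=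
          by gcongr; exact hC₁ (K/2) hK2
      _ = C₁ * ENNReal.ofReal ((K/2) ^ ((d:ℝ) - l - m)) := by
          rw [mul_assoc, ← ENNReal.ofReal_mul (by positivity), rpow_helper hK2]
  have hsumB : ∑' k₁, GB k₁ ≤ C₂ * ENNReal.ofReal ((K/2) ^ ((d:ℝ) - l - m)) := by
    rw [hGB_def]
    have hre : ∑' k₁ : Fin d → ℤ, Set.indicator {n : Fin d → ℤ | n ≠ 0 ∧ znormd d n ≤ K/2}
        (fun n => ENNReal.ofReal (1 / znormd d n ^ m)) (k - k₁) * ENNReal.ofReal (((K/2)⁻¹) ^ l)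
        = ∑' n : Fin d → ℤ, Set.indicator {n : Fin d → ℤ | n ≠ 0 ∧ znormd d n ≤ K/2}
        (fun n => ENNReal.ofReal (1 / znormd d n ^ m)) n * ENNReal.ofReal (((K/2)⁻¹) ^ l) := by
      exact (Equiv.subLeft k).tsum_eq (fun n => Set.indicator {n : Fin d → ℤ | n ≠ 0 ∧ znormd d n ≤ K/2}
        (fun n => ENNReal.ofReal (1 / znormd d n ^ m)) n * ENNReal.ofReal (((K/2)⁻¹) ^ l))
    rw [hre, ENNReal.tsum_mul_right]
    calc _ ≤ (C₂ * ENNReal.ofReal ((K/2) ^ ((d:ℝ) - m))) * ENNReal.ofReal (((K/2)⁻¹) ^ l) :=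
          by gcongr; exact hC₂ (K/2) hK2
      _ = C₂ * ENNReal.ofReal ((K/2) ^ ((d:ℝ) - l - m)) := by
          rw [mul_assoc, ← ENNReal.ofReal_mul (by positivity), rpow_helper hK2]
          ring_nf
  have hsumC : ∑' k₁, GC k₁
      ≤ ENNReal.ofReal ((3:ℝ)^m) * C₃ * ENNReal.ofReal ((K/2) ^ ((d:ℝ) - l - m)) := by
    rw [hGC_def]
    rw [ENNReal.tsum_mul_right]
    calc _ ≤ (C₃ * ENNReal.ofReal ((K/2) ^ ((d:ℝ) - (l + m)))) * ENNReal.ofReal ((3:ℝ) ^ m) :=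
          by gcongr; exact hC₃ (K/2) hK2'
      _ = ENNReal.ofReal ((3:ℝ)^m) * C₃ * ENNReal.ofReal ((K/2) ^ ((d:ℝ) - l - m)) := by
          rw [show (d:ℝ) - (l + m) = (d:ℝ) - l - m by ring]
          ring
  -- combine
  have hmain : (∑' k₁ : Fin d → ℤ,
      if k₁ ≠ 0 ∧ k₁ ≠ k then
        ENNReal.ofReal (1 / (znormd d k₁ ^ l * znormd d (k - k₁) ^ m))
      else 0) ≤ Ctot * ENNReal.ofReal (K ^ ((d:ℝ) - l - m)) := by
    calc (∑' k₁ : Fin d → ℤ,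
        if k₁ ≠ 0 ∧ k₁ ≠ k then
          ENNReal.ofReal (1 / (znormd d k₁ ^ l * znormd d (k - k₁) ^ m))
        else 0)
        ≤ ∑' k₁, (GA k₁ + GB k₁ + GC k₁) := ENNReal.tsum_le_tsum hpt
      _ = (∑' k₁, GA k₁) + (∑' k₁, GB k₁) + (∑' k₁, GC k₁) := by
          rw [ENNReal.tsum_add, ENNReal.tsum_add]
      _ ≤ (C₁ + C₂ + ENNReal.ofReal ((3:ℝ)^m) * C₃) * ENNReal.ofReal ((K/2) ^ ((d:ℝ) - l - m)) := by
          rw [add_mul, add_mul]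
          exact add_le_add (add_le_add hsumA hsumB) hsumC
      _ = Ctot * ENNReal.ofReal (K ^ ((d:ℝ) - l - m)) := by
          rw [hCtot_def]
          have hexp : (K/2) ^ ((d:ℝ) - l - m)
              = (2:ℝ) ^ (l + m - (d:ℝ)) * K ^ ((d:ℝ) - l - m) := by
            rw [Real.div_rpow hK0.le (by norm_num)]
            rw [show (l + m - (d:ℝ)) = -((d:ℝ) - l - m) by ring, Real.rpow_neg (by norm_num)]
            field_simp
          rw [hexp, ENNReal.ofReal_mul (by positivity)]
          ring
  -- convert to division form
  have hfin : Ctot * ENNReal.ofReal (K ^ ((d:ℝ) - l - m))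
      = (Ctot.toNNReal : ℝ≥0∞) / ENNReal.ofReal (K ^ (l + m - (d:ℝ))) := by
    rw [ENNReal.coe_toNNReal hCtot_ne]
    rw [show ((d:ℝ) - l - m) = -(l + m - (d:ℝ)) by ring, Real.rpow_neg hK0.le]
    rw [ENNReal.ofReal_inv_of_pos (Real.rpow_pos_of_pos hK0 _)]
    rw [div_eq_mul_inv]
  rw [hfin] at hmain
  exact hmain

end
end

section
/- For any 0 < η < 1 and indices i, j, l ∈ {1,2,3}, there is a constant C (depending only on η) such that for all nonzero k₁, k₂ ∈ ℤ³ with k₁ + k₂ ≠ 0 and all 0 ≤ s < t: |e^{-|k₁+k₂|²(t−s)} (k₁+k₂)^i P̂^{jl}(k₁+k₂) − e^{-|k₂|²(t−s)} k₂^i P̂^{jl}(k₂)| ≤ C |k₁|^η (t−s)^{-(1−η)/2}. -/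
noncomputable section

/-- Euclidean norm of a lattice point in `ℤ³`. -/
def znorm3 (k : Fin 3 → ℤ) : ℝ := Real.sqrt (∑ i, ((k i : ℝ))^2)

/-- Fourier multiplier of the Leray projection: `P̂^{jl}(k) = δ_{jl} − k^j k^l/|k|²`. -/
def PhatZ (a b : Fin 3) (k : Fin 3 → ℤ) : ℝ :=
  (if a = b then 1 else 0) - (k a : ℝ) * (k b : ℝ) / (znorm3 k)^2

def evec (k : Fin 3 → ℤ) : EuclideanSpace ℝ (Fin 3) := WithLp.toLp 2 (fun i => (k i : ℝ))

lemma znorm3_eq_norm (k : Fin 3 → ℤ) : znorm3 k = ‖evec k‖ := by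
  rw [EuclideanSpace.norm_eq]
  unfold znorm3 evec
  congr 1
  refine Finset.sum_congr rfl fun i _ => ?_
  rw [Real.norm_eq_abs, sq_abs]

lemma znorm3_nonneg (k : Fin 3 → ℤ) : 0 ≤ znorm3 k := Real.sqrt_nonneg _

lemma znorm3_sq (k : Fin 3 → ℤ) : (znorm3 k)^2 = ∑ i, ((k i:ℝ))^2 :=
  Real.sq_sqrt (Finset.sum_nonneg fun i _ => sq_nonneg _)

lemma znorm3_pos {k : Fin 3 → ℤ} (hk : k ≠ 0) : 0 < znorm3 k := by
  rw [znorm3_eq_norm, norm_pos_iff]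
  intro h
  apply hk
  funext i
  have h2 : evec k i = 0 := by rw [h]; rfl
  have : (k i : ℝ) = 0 := h2
  exact_mod_cast this

lemma evec_add (k₁ k₂ : Fin 3 → ℤ) : evec (k₁ + k₂) = evec k₁ + evec k₂ := by
  ext i
  show ((k₁ + k₂) i : ℝ) = (k₁ i : ℝ) + (k₂ i : ℝ)
  push_cast [Pi.add_apply]
  ring

lemma znorm3_add_le (k₁ k₂ : Fin 3 → ℤ) :
    znorm3 (k₁ + k₂) ≤ znorm3 k₁ + znorm3 k₂ := by
  simp only [znorm3_eq_norm, evec_add]; exact norm_add_le _ _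

lemma znorm3_sub_abs (k₁ k₂ : Fin 3 → ℤ) :
    |znorm3 (k₁ + k₂) - znorm3 k₂| ≤ znorm3 k₁ := by
  simp only [znorm3_eq_norm, evec_add]
  have := abs_norm_sub_norm_le (evec k₁ + evec k₂) (evec k₂)
  simpa using this

lemma abs_coe_le (k : Fin 3 → ℤ) (i : Fin 3) : |(k i : ℝ)| ≤ znorm3 k := by
  rw [← Real.sqrt_sq_eq_abs]
  exact Real.sqrt_le_sqrt (Finset.single_le_sum (f := fun j => ((k j:ℝ))^2)
    (fun j _ => sq_nonneg _) (Finset.mem_univ i))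

lemma phat_abs_le {k : Fin 3 → ℤ} (hk : k ≠ 0) (a b : Fin 3) : |PhatZ a b k| ≤ 2 := by
  have h0 := znorm3_pos hk
  have ha := abs_coe_le k a
  have hb := abs_coe_le k b
  have h1 : |(k a:ℝ) * (k b:ℝ) / (znorm3 k)^2| ≤ 1 := by
    rw [abs_div, abs_mul, abs_of_pos (by positivity : (0:ℝ) < (znorm3 k)^2),
      div_le_one (by positivity)]
    calc |(k a:ℝ)| * |(k b:ℝ)| ≤ znorm3 k * znorm3 k :=
          mul_le_mul ha hb (abs_nonneg _) h0.le
      _ = (znorm3 k)^2 := by ring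
  have h2 : |(if a = b then (1:ℝ) else 0)| ≤ 1 := by split <;> simp
  calc |PhatZ a b k| ≤ |(if a = b then (1:ℝ) else 0)| + |(k a:ℝ) * (k b:ℝ) / (znorm3 k)^2| :=
        abs_sub _ _
    _ ≤ 2 := by linarith

lemma xexp_le_one {x : ℝ} (hx : 0 ≤ x) : x * Real.exp (-x) ≤ 1 := by
  have h := Real.add_one_le_exp x
  have he := Real.exp_pos x
  rw [Real.exp_neg]
  rw [mul_inv_le_iff₀ he]
  linarith

lemma exp_neg_le_one {x : ℝ} (hx : 0 ≤ x) : Real.exp (-x) ≤ 1 := by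
  rw [Real.exp_le_one_iff]; linarith

lemma uexp8 {u : ℝ} (hu : 0 ≤ u) : u * Real.exp (-(u/8)) ≤ 8 := by
  have := xexp_le_one (x := u/8) (by linarith)
  nlinarith [Real.exp_pos (-(u/8))]

lemma yexp_le {y θ : ℝ} (hy : 0 ≤ y) (h0 : 0 ≤ θ) (h1 : θ ≤ 1) :
    y ^ θ * Real.exp (-(y^2/8)) ≤ 4 := by
  have hE1 : Real.exp (-(y^2/8)) ≤ 1 := exp_neg_le_one (by positivity)
  have hEp : 0 < Real.exp (-(y^2/8)) := Real.exp_pos _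
  have hpow : y ^ θ ≤ 1 + y := by
    rcases le_total y 1 with h | h
    · have := Real.rpow_le_one hy h h0
      linarith
    · have := Real.rpow_le_rpow_of_exponent_le h h1
      rw [Real.rpow_one] at this
      linarith
  have hy3 : y * Real.exp (-(y^2/8)) ≤ 3 := by
    rcases le_total y 3 with h | h
    · nlinarith
    · have h8 : y^2 * Real.exp (-(y^2/8)) ≤ 8 := by
        have := uexp8 (u := y^2) (by positivity)
        linarith
      nlinarith
  have : y ^ θ * Real.exp (-(y^2/8)) ≤ (1 + y) * Real.exp (-(y^2/8)) :=
    mul_le_mul_of_nonneg_right hpow hEp.le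
  nlinarith

lemma decay {θ b τ : ℝ} (h0 : 0 ≤ θ) (h1 : θ ≤ 1) (hb : 0 < b) (hτ : 0 < τ) :
    b ^ θ * Real.exp (-(b^2*τ/8)) ≤ 4 * τ ^ (-(θ/2)) := by
  set y := b * Real.sqrt τ with hy
  have hsτ : 0 < Real.sqrt τ := Real.sqrt_pos.mpr hτ
  have hyp : 0 < y := by positivity
  have hy2 : y^2 = b^2 * τ := by
    rw [hy, mul_pow, Real.sq_sqrt hτ.le]
  have hτθ : 0 < τ ^ (-(θ/2)) := Real.rpow_pos_of_pos hτ _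
  have hbθ : b ^ θ = y ^ θ * τ ^ (-(θ/2)) := by
    rw [hy, Real.mul_rpow hb.le hsτ.le, Real.sqrt_eq_rpow, ← Real.rpow_mul hτ.le,
      mul_assoc, ← Real.rpow_add hτ, show (1:ℝ)/2*θ + -(θ/2) = 0 by ring, Real.rpow_zero, mul_one]
  have hkey : y ^ θ * Real.exp (-(y^2/8)) ≤ 4 := yexp_le hyp.le h0 h1
  calc b ^ θ * Real.exp (-(b^2*τ/8)) = (y ^ θ * Real.exp (-(y^2/8))) * τ ^ (-(θ/2)) := by
        rw [hbθ, hy2]; ring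
    _ ≤ 4 * τ ^ (-(θ/2)) := mul_le_mul_of_nonneg_right hkey hτθ.le

lemma exp_abs_sub {u v : ℝ} :
    |Real.exp (-u) - Real.exp (-v)| ≤ |u - v| * Real.exp (-(min u v)) := by
  have key : ∀ x y : ℝ, x ≤ y →
      Real.exp (-x) - Real.exp (-y) ≤ (y - x) * Real.exp (-x) := by
    intro x y hxy
    have h1 : -(y-x) + 1 ≤ Real.exp (-(y-x)) := Real.add_one_le_exp _
    have h2 : Real.exp (-y) = Real.exp (-x) * Real.exp (-(y-x)) := by
      rw [← Real.exp_add]; ring_nf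
    nlinarith [Real.exp_pos (-x)]
  rcases le_total u v with h | h
  · rw [min_eq_left h, abs_of_nonpos (by linarith : u - v ≤ 0), abs_of_nonneg]
    · have := key u v h; linarith
    · have := Real.exp_le_exp.mpr (neg_le_neg h)
      linarith
  · rw [min_eq_right h, abs_of_nonneg (by linarith : (0:ℝ) ≤ u - v), abs_of_nonpos]
    · have := key v u h
      linarith
    · have := Real.exp_le_exp.mpr (neg_le_neg h)
      linarith

lemma rpow_interp {c b η : ℝ} (hc : 0 < c) (hcb : c ≤ b) (h0 : 0 ≤ η) (h1 : η ≤ 1) :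
    c ≤ c ^ η * b ^ (1 - η) := by
  have hb : 0 < b := lt_of_lt_of_le hc hcb
  have h2 : c ^ (1-η) ≤ b ^ (1-η) := Real.rpow_le_rpow hc.le hcb (by linarith)
  have h3 : c ^ η * c ^ (1-η) = c := by
    rw [← Real.rpow_add hc]; norm_num
  have h4 : 0 < c ^ η := Real.rpow_pos_of_pos hc _
  nlinarith

lemma rpow_scale {a c η m : ℝ} (hc : 0 < c) (hm : 1 ≤ m) (ha : 0 < a) (hac : a ≤ m * c)
    (h0 : 0 ≤ η) (h1 : η ≤ 1) : a ^ η ≤ m * c ^ η := by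
  have hmc : (0:ℝ) < m * c := by positivity
  have h2 : a ^ η ≤ (m*c) ^ η := Real.rpow_le_rpow ha.le hac h0
  have h3 : (m*c) ^ η = m ^ η * c ^ η := Real.mul_rpow (by linarith) hc.le
  have h4 : m ^ η ≤ m := by
    have := Real.rpow_le_rpow_of_exponent_le hm h1
    rwa [Real.rpow_one] at this
  have h5 : 0 < c ^ η := Real.rpow_pos_of_pos hc _
  nlinarith

lemma single_bound {η x c τ : ℝ} (hη0 : 0 < η) (hη1 : η < 1) (hx : 0 < x) (hτ : 0 < τ)
    (hc : 0 < c) (m : ℝ) (hm : 1 ≤ m) (hxc : x ≤ m * c) {v P : ℝ}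
    (hv : |v| ≤ x) (hP : |P| ≤ 2) :
    |Real.exp (-(x^2*τ)) * v * P| ≤ 8 * m * (c ^ η * τ ^ (-((1-η)/2))) := by
  have hE : Real.exp (-(x^2*τ)) ≤ Real.exp (-(x^2*τ/8)) := Real.exp_le_exp.mpr (by nlinarith)
  have hd := decay (θ := 1-η) (by linarith) (by linarith) hx hτ
  have hsplit : x ^ η * x ^ (1-η) = x := by
    rw [← Real.rpow_add hx, show η + (1-η) = 1 by ring, Real.rpow_one]
  have hxη := rpow_scale hc hm hx hxc hη0.le hη1.le
  have h2 : 0 ≤ x^(1-η) * Real.exp (-(x^2*τ/8)) := by positivity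
  calc |Real.exp (-(x^2*τ)) * v * P| = Real.exp (-(x^2*τ)) * |v| * |P| := by
        rw [abs_mul, abs_mul, abs_of_pos (Real.exp_pos _)]
    _ ≤ Real.exp (-(x^2*τ/8)) * x * 2 := by
        apply mul_le_mul (mul_le_mul hE hv (abs_nonneg _) (Real.exp_pos _).le) hP
          (abs_nonneg _) (by positivity)
    _ = 2 * (x^η * (x^(1-η) * Real.exp (-(x^2*τ/8)))) := by
        rw [show x^η*(x^(1-η)*Real.exp (-(x^2*τ/8))) = (x^η*x^(1-η))*Real.exp (-(x^2*τ/8)) by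
          ring, hsplit]; ring
    _ ≤ 2 * ((m * c^η) * (4 * τ^(-((1-η)/2)))) := by
        apply mul_le_mul_of_nonneg_left
          (mul_le_mul hxη hd h2 (by positivity)) (by norm_num)
    _ = 8 * m * (c^η * τ^(-((1-η)/2))) := by ring


lemma div_bound1 {x y a b c : ℝ} (ha : 0 < a) (hb : 0 < b) (hc : 0 < c)
    (hx : |x| ≤ c) (hy : |y| ≤ a) (hba : b ≤ 2*a) : |x * y / a^2| ≤ 2*c/b := by
  rw [abs_div, abs_mul, abs_of_pos (show (0:ℝ) < a^2 by positivity),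
    div_le_div_iff₀ (by positivity) hb]
  nlinarith [mul_le_mul_of_nonneg_right (mul_le_mul hx hy (abs_nonneg _) hc.le) hb.le,
    mul_le_mul_of_nonneg_left hba (show (0:ℝ) ≤ c*a by positivity)]

lemma div_bound2 {x y a b c : ℝ} (ha : 0 < a) (hb : 0 < b) (hc : 0 < c)
    (hx : |x| ≤ b) (hy : |y| ≤ c) (hba : b ≤ 2*a) : |x * y / a^2| ≤ 4*c/b := by
  rw [abs_div, abs_mul, abs_of_pos (show (0:ℝ) < a^2 by positivity),
    div_le_div_iff₀ (by positivity) hb]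
  nlinarith [mul_le_mul_of_nonneg_right (mul_le_mul hx hy (abs_nonneg _) hb.le) hb.le,
    mul_le_mul_of_nonneg_left (mul_le_mul hba hba hb.le (by positivity)) hc.le]

lemma div_bound3 {x y a b c : ℝ} (ha : 0 < a) (hb : 0 < b) (hc : 0 < c)
    (hx : |x| ≤ b) (hy : |y| ≤ b) (hba : b/2 ≤ a) (hab : a ≤ 3/2*b)
    (hdiff : |b - a| ≤ c) : |x*y*(1/a^2 - 1/b^2)| ≤ 10*c/b := by
  have ha0 : a ≠ 0 := ne_of_gt ha
  have hb0 : b ≠ 0 := ne_of_gt hb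
  have hfrac : 1/a^2 - 1/b^2 = (b^2 - a^2)/(a^2*b^2) := by
    field_simp
  have ha2 : b^2/4 ≤ a^2 := by
    nlinarith [mul_le_mul hba hba (by positivity : (0:ℝ) ≤ b/2) ha.le]
  have hnum : |x * y * (b^2 - a^2)| ≤ 5/2*c*b^3 := by
    have h3 : |b^2 - a^2| ≤ c * (5/2*b) := by
      rw [show b^2 - a^2 = (b-a)*(b+a) by ring, abs_mul,
        abs_of_pos (show (0:ℝ) < b + a by positivity)]
      exact mul_le_mul hdiff (by linarith) (by positivity) hc.le
    calc |x * y * (b^2 - a^2)| = |x| * |y| * |b^2 - a^2| := by rw [abs_mul, abs_mul]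
      _ ≤ b * b * (c * (5/2*b)) :=
          mul_le_mul (mul_le_mul hx hy (abs_nonneg _) hb.le) h3 (abs_nonneg _) (by positivity)
      _ = 5/2*c*b^3 := by ring
  rw [hfrac, show x * y * ((b^2 - a^2)/(a^2*b^2)) = (x * y * (b^2 - a^2))/(a^2*b^2) by ring,
    abs_div, abs_of_pos (show (0:ℝ) < a^2*b^2 by positivity),
    div_le_div_iff₀ (by positivity) hb]
  nlinarith [mul_le_mul_of_nonneg_right hnum hb.le,
    mul_le_mul_of_nonneg_left ha2 (show (0:ℝ) ≤ 10*c*b^2 by positivity)]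

lemma final_step {c b η τ E8 : ℝ} (hc : 0 < c) (hb : 0 < b) (hτ : 0 < τ) (hE8 : 0 < E8)
    (hη0 : 0 < η) (hη1 : η < 1) (hcb : c ≤ b)
    (hdecayb : b ^ (1-η) * E8 ≤ 4 * τ ^ (-((1-η)/2))) :
    78 * (c * E8) ≤ 400 * c ^ η * τ ^ (-((1 - η)/2)) := by
  have hinterp := rpow_interp hc hcb hη0.le hη1.le
  have hcη : 0 < c ^ η := Real.rpow_pos_of_pos hc _
  have hRHS : 0 < τ ^ (-((1-η)/2)) := Real.rpow_pos_of_pos hτ _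
  have h1 : c * E8 ≤ c ^ η * b ^ (1-η) * E8 := by
    nlinarith [mul_le_mul_of_nonneg_right hinterp hE8.le]
  have h2 : c ^ η * (b ^ (1-η) * E8) ≤ c ^ η * (4 * τ ^ (-((1-η)/2))) :=
    mul_le_mul_of_nonneg_left hdecayb hcη.le
  nlinarith

set_option maxHeartbeats 1000000 in
/-- for `0 < η < 1` one has
`|e^{-|k₁₂|²(t−s)} k₁₂^i P̂^{jl}(k₁₂) − e^{-|k₂|²(t−s)} k₂^i P̂^{jl}(k₂)|
  ≤ C |k₁|^η (t−s)^{-(1−η)/2}`. -/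
theorem stmt1 (η : ℝ) (hη0 : 0 < η) (hη1 : η < 1) (i j l : Fin 3) :
    ∃ C : ℝ, ∀ k₁ k₂ : Fin 3 → ℤ, k₁ ≠ 0 → k₂ ≠ 0 → k₁ + k₂ ≠ 0 →
      ∀ s t : ℝ, 0 ≤ s → s < t →
      |Real.exp (-((znorm3 (k₁ + k₂))^2 * (t - s))) * (((k₁ + k₂) i : ℤ) : ℝ) * PhatZ j l (k₁ + k₂)
          - Real.exp (-((znorm3 k₂)^2 * (t - s))) * ((k₂ i : ℤ) : ℝ) * PhatZ j l k₂| ≤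
        C * znorm3 k₁ ^ η * (t - s) ^ (-((1 - η) / 2)) := by
  refine ⟨400, ?_⟩
  intro k₁ k₂ hk₁ hk₂ hk₁₂ s t hs hst
  set τ := t - s with hτdef
  have hτ : 0 < τ := by rw [hτdef]; linarith
  set a := znorm3 (k₁ + k₂) with hadef
  set b := znorm3 k₂ with hbdef
  set c := znorm3 k₁ with hcdef
  clear_value τ a b c
  have ha : 0 < a := by rw [hadef]; exact znorm3_pos hk₁₂
  have hb : 0 < b := by rw [hbdef]; exact znorm3_pos hk₂
  have hc : 0 < c := by rw [hcdef]; exact znorm3_pos hk₁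
  have htri : a ≤ c + b := by rw [hadef, hbdef, hcdef]; exact znorm3_add_le k₁ k₂
  have hrev : |a - b| ≤ c := by rw [hadef, hbdef, hcdef]; exact znorm3_sub_abs k₁ k₂
  have hRHS : 0 < τ ^ (-((1 - η)/2)) := Real.rpow_pos_of_pos hτ _
  have hcη : 0 < c ^ η := Real.rpow_pos_of_pos hc _
  have hpi : |(((k₁+k₂) i : ℤ):ℝ)| ≤ a := by rw [hadef]; exact abs_coe_le _ _
  have hqi : |((k₂ i : ℤ):ℝ)| ≤ b := by rw [hbdef]; exact abs_coe_le _ _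
  have hP : |PhatZ j l (k₁+k₂)| ≤ 2 := phat_abs_le hk₁₂ j l
  have hQ : |PhatZ j l k₂| ≤ 2 := phat_abs_le hk₂ j l
  by_cases hcase : b ≤ 2*c
  · -- both norms comparable to c : bound each term separately
    have h3c : a ≤ 3 * c := by linarith
    have hA := single_bound hη0 hη1 ha hτ hc 3 (by norm_num) h3c hpi hP
    have hB := single_bound hη0 hη1 hb hτ hc 2 (by norm_num) hcase hqi hQ
    have := abs_sub (Real.exp (-(a^2*τ)) * (((k₁+k₂) i : ℤ):ℝ) * PhatZ j l (k₁+k₂))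
      (Real.exp (-(b^2*τ)) * ((k₂ i : ℤ):ℝ) * PhatZ j l k₂)
    have hprod : 0 < c ^ η * τ ^ (-((1 - η)/2)) := by positivity
    nlinarith
  · -- c small compared to b
    push_neg at hcase
    have hcb : c ≤ b := by linarith
    have hab1 : b/2 ≤ a := by
      have := abs_le.mp hrev
      linarith [this.2]
    have hab2 : a ≤ 3/2 * b := by linarith
    set E8 := Real.exp (-(b^2*τ/8)) with hE8def
    clear_value E8
    have hE8 : 0 < E8 := by rw [hE8def]; exact Real.exp_pos _
    have hEb8 : Real.exp (-(b^2*τ)) ≤ E8 := by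
      rw [hE8def]
      exact Real.exp_le_exp.mpr (by nlinarith)
    -- decomposition
    have hcast_i : (((k₁+k₂) i : ℤ):ℝ) = (k₁ i:ℝ) + (k₂ i:ℝ) := by
      simp [Pi.add_apply]
    have hsplit : Real.exp (-(a^2*τ)) * (((k₁+k₂) i : ℤ):ℝ) * PhatZ j l (k₁+k₂)
        - Real.exp (-(b^2*τ)) * ((k₂ i : ℤ):ℝ) * PhatZ j l k₂
        = (Real.exp (-(a^2*τ)) - Real.exp (-(b^2*τ))) * (((k₁+k₂) i : ℤ):ℝ) * PhatZ j l (k₁+k₂)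
          + Real.exp (-(b^2*τ)) * (k₁ i:ℝ) * PhatZ j l (k₁+k₂)
          + Real.exp (-(b^2*τ)) * ((k₂ i : ℤ):ℝ) * (PhatZ j l (k₁+k₂) - PhatZ j l k₂) := by
      rw [hcast_i]; ring
    -- T1
    have hu8 : b^2*τ * Real.exp (-(b^2*τ/4)) ≤ 8 * E8 := by
      have h1 := uexp8 (u := b^2*τ) (by positivity)
      have h2 : Real.exp (-(b^2*τ/4)) = E8 * E8 := by
        rw [hE8def, ← Real.exp_add]
        congr 1
        ring
      rw [h2]
      nlinarith [mul_le_mul_of_nonneg_right h1 hE8.le]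
    have hEdiff : |Real.exp (-(a^2*τ)) - Real.exp (-(b^2*τ))|
        ≤ (5/2*c*b*τ) * Real.exp (-(b^2*τ/4)) := by
      have h := exp_abs_sub (u := a^2*τ) (v := b^2*τ)
      have hmin : Real.exp (-(min (a^2*τ) (b^2*τ))) ≤ Real.exp (-(b^2*τ/4)) := by
        apply Real.exp_le_exp.mpr
        apply neg_le_neg
        refine le_min ?_ ?_
        · nlinarith [mul_le_mul_of_nonneg_right
            (mul_le_mul hab1 hab1 (by positivity : (0:ℝ) ≤ b/2) ha.le) hτ.le]
        · nlinarith
      have habs : |a^2*τ - b^2*τ| ≤ 5/2*c*b*τ := by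
        rw [show a^2*τ - b^2*τ = (a-b)*((a+b)*τ) by ring, abs_mul,
          abs_of_pos (show (0:ℝ) < (a+b)*τ by positivity)]
        nlinarith [mul_le_mul hrev (mul_le_mul_of_nonneg_right
          (show a+b ≤ 5/2*b by linarith) hτ.le) (by positivity) hc.le]
      calc |Real.exp (-(a^2*τ)) - Real.exp (-(b^2*τ))|
          ≤ |a^2*τ - b^2*τ| * Real.exp (-(min (a^2*τ) (b^2*τ))) := h
        _ ≤ (5/2*c*b*τ) * Real.exp (-(b^2*τ/4)) :=
            mul_le_mul habs hmin (Real.exp_pos _).le (by positivity)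
    have hT1 : |(Real.exp (-(a^2*τ)) - Real.exp (-(b^2*τ))) * (((k₁+k₂) i : ℤ):ℝ)
        * PhatZ j l (k₁+k₂)| ≤ 60 * (c * E8) := by
      calc |(Real.exp (-(a^2*τ)) - Real.exp (-(b^2*τ))) * (((k₁+k₂) i : ℤ):ℝ)
            * PhatZ j l (k₁+k₂)|
          = |Real.exp (-(a^2*τ)) - Real.exp (-(b^2*τ))| * |(((k₁+k₂) i : ℤ):ℝ)|
            * |PhatZ j l (k₁+k₂)| := by rw [abs_mul, abs_mul]
        _ ≤ ((5/2*c*b*τ) * Real.exp (-(b^2*τ/4))) * a * 2 := by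
            apply mul_le_mul (mul_le_mul hEdiff hpi (abs_nonneg _) (by positivity)) hP
              (abs_nonneg _) (by positivity)
        _ ≤ 60 * (c * E8) := by
            nlinarith [mul_le_mul_of_nonneg_left hab2
                (show (0:ℝ) ≤ 5*c*τ*Real.exp (-(b^2*τ/4)) by positivity),
              mul_le_mul_of_nonneg_left hu8 (show (0:ℝ) ≤ 15/2*c by positivity),
              Real.exp_pos (-(b^2*τ/4))]
    -- T2
    have hk1i : |(k₁ i:ℝ)| ≤ c := by rw [hcdef]; exact abs_coe_le _ _
    have hT2 : |Real.exp (-(b^2*τ)) * (k₁ i:ℝ) * PhatZ j l (k₁+k₂)| ≤ 2 * (c * E8) := by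
      calc |Real.exp (-(b^2*τ)) * (k₁ i:ℝ) * PhatZ j l (k₁+k₂)|
          = Real.exp (-(b^2*τ)) * |(k₁ i:ℝ)| * |PhatZ j l (k₁+k₂)| := by
            rw [abs_mul, abs_mul, abs_of_pos (Real.exp_pos _)]
        _ ≤ E8 * c * 2 := by
            apply mul_le_mul (mul_le_mul hEb8 hk1i (abs_nonneg _) hE8.le) hP
              (abs_nonneg _) (by positivity)
        _ = 2 * (c * E8) := by ring
    -- T3
    have hpj : |(((k₁+k₂) j : ℤ):ℝ)| ≤ a := by rw [hadef]; exact abs_coe_le _ _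
    have hpl : |(((k₁+k₂) l : ℤ):ℝ)| ≤ a := by rw [hadef]; exact abs_coe_le _ _
    have hqj : |((k₂ j : ℤ):ℝ)| ≤ b := by rw [hbdef]; exact abs_coe_le _ _
    have hql : |((k₂ l : ℤ):ℝ)| ≤ b := by rw [hbdef]; exact abs_coe_le _ _
    have hk1j : |(k₁ j:ℝ)| ≤ c := by rw [hcdef]; exact abs_coe_le _ _
    have hk1l : |(k₁ l:ℝ)| ≤ c := by rw [hcdef]; exact abs_coe_le _ _
    have hPQ : |PhatZ j l (k₁+k₂) - PhatZ j l k₂| ≤ 16 * c / b := by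
      have hcast_j : (((k₁+k₂) j : ℤ):ℝ) = (k₁ j:ℝ) + (k₂ j:ℝ) := by simp [Pi.add_apply]
      have hcast_l : (((k₁+k₂) l : ℤ):ℝ) = (k₁ l:ℝ) + (k₂ l:ℝ) := by simp [Pi.add_apply]
      have hid : PhatZ j l (k₁+k₂) - PhatZ j l k₂
          = -((k₁ j:ℝ) * (((k₁+k₂) l : ℤ):ℝ) / a^2
              + (k₂ j:ℝ) * (k₁ l:ℝ) / a^2
              + (k₂ j:ℝ) * (k₂ l:ℝ) * (1/a^2 - 1/b^2)) := by
        simp only [PhatZ]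
        rw [← hadef, ← hbdef]
        rw [hcast_j, hcast_l]
        ring
      have hb1 : |(k₁ j:ℝ) * (((k₁+k₂) l : ℤ):ℝ) / a^2| ≤ 2*c/b :=
        div_bound1 ha hb hc hk1j hpl (by linarith)
      have hb2 : |(k₂ j:ℝ) * (k₁ l:ℝ) / a^2| ≤ 4*c/b :=
        div_bound2 ha hb hc hqj hk1l (by linarith)
      have hb3 : |(k₂ j:ℝ) * (k₂ l:ℝ) * (1/a^2 - 1/b^2)| ≤ 10*c/b :=
        div_bound3 ha hb hc hqj hql hab1 hab2 (by rw [abs_sub_comm]; exact hrev)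
      calc |PhatZ j l (k₁+k₂) - PhatZ j l k₂|
          = |(k₁ j:ℝ) * (((k₁+k₂) l : ℤ):ℝ) / a^2
              + (k₂ j:ℝ) * (k₁ l:ℝ) / a^2
              + (k₂ j:ℝ) * (k₂ l:ℝ) * (1/a^2 - 1/b^2)| := by rw [hid, abs_neg]
        _ ≤ |(k₁ j:ℝ) * (((k₁+k₂) l : ℤ):ℝ) / a^2|
              + |(k₂ j:ℝ) * (k₁ l:ℝ) / a^2|
              + |(k₂ j:ℝ) * (k₂ l:ℝ) * (1/a^2 - 1/b^2)| := abs_add_three _ _ _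
        _ ≤ 16 * c / b := by
            rw [show (16:ℝ)*c/b = 2*c/b + 4*c/b + 10*c/b by ring]
            exact add_le_add (add_le_add hb1 hb2) hb3
    have hT3 : |Real.exp (-(b^2*τ)) * ((k₂ i : ℤ):ℝ) * (PhatZ j l (k₁+k₂) - PhatZ j l k₂)|
        ≤ 16 * (c * E8) := by
      calc |Real.exp (-(b^2*τ)) * ((k₂ i : ℤ):ℝ) * (PhatZ j l (k₁+k₂) - PhatZ j l k₂)|
          = Real.exp (-(b^2*τ)) * |((k₂ i : ℤ):ℝ)| * |PhatZ j l (k₁+k₂) - PhatZ j l k₂| := by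
            rw [abs_mul, abs_mul, abs_of_pos (Real.exp_pos _)]
        _ ≤ E8 * b * (16 * c / b) := by
            apply mul_le_mul (mul_le_mul hEb8 hqi (abs_nonneg _) hE8.le) hPQ
              (abs_nonneg _) (by positivity)
        _ = 16 * (c * E8) := by field_simp
    -- assemble
    have hinterp : c ≤ c ^ η * b ^ (1-η) := rpow_interp hc hcb hη0.le hη1.le
    have hdecayb := decay (θ := 1-η) (by linarith) (by linarith) hb hτ
    rw [← hE8def] at hdecayb
    calc |Real.exp (-(a^2*τ)) * (((k₁+k₂) i : ℤ):ℝ) * PhatZ j l (k₁+k₂)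
          - Real.exp (-(b^2*τ)) * ((k₂ i : ℤ):ℝ) * PhatZ j l k₂|
        = |(Real.exp (-(a^2*τ)) - Real.exp (-(b^2*τ))) * (((k₁+k₂) i : ℤ):ℝ)
            * PhatZ j l (k₁+k₂)
          + Real.exp (-(b^2*τ)) * (k₁ i:ℝ) * PhatZ j l (k₁+k₂)
          + Real.exp (-(b^2*τ)) * ((k₂ i : ℤ):ℝ) * (PhatZ j l (k₁+k₂) - PhatZ j l k₂)| := by
          rw [hsplit]
      _ ≤ |(Real.exp (-(a^2*τ)) - Real.exp (-(b^2*τ))) * (((k₁+k₂) i : ℤ):ℝ)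
            * PhatZ j l (k₁+k₂)|
          + |Real.exp (-(b^2*τ)) * (k₁ i:ℝ) * PhatZ j l (k₁+k₂)|
          + |Real.exp (-(b^2*τ)) * ((k₂ i : ℤ):ℝ) * (PhatZ j l (k₁+k₂) - PhatZ j l k₂)| :=
          abs_add_three _ _ _
      _ ≤ 60 * (c * E8) + 2 * (c * E8) + 16 * (c * E8) :=
          add_le_add (add_le_add hT1 hT2) hT3
      _ = 78 * (c * E8) := by ring
      _ ≤ 400 * c ^ η * τ ^ (-((1 - η)/2)) :=
          final_step hc hb hτ hE8 hη0 hη1 hcb hdecayb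

end
end
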